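/- Let φ : ℝ → ℝ be a four-times continuously differentiable function that is bounded (there exists B ∈ ℝ such that |φ(t)| ≤ B for all t ∈ ℝ) and whose fourth derivative is nonnegative everywhere, i.e. φ⁗(t) ≥ 0 for all t ∈ ℝ. Then φ is constant. -/
import Mathlib

open Set

/-- If `deriv f ≥ c > 0` on `[a, ∞)` then `f` exceeds any `M` far to the right. -/
lemma growth_aux (f : ℝ → ℝ) (hf : Differentiable ℝ f) (a : ℝ) {c : ℝ} (hc : 0 < c)
    (h : ∀ t, a ≤ t → c ≤ deriv f t) (M : ℝ) : ∃ b, a ≤ b ∧ ∀ t, b ≤ t → M ≤ f t := by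
  have key : ∀ t, a ≤ t → c * (t - a) ≤ f t - f a := by
    intro t ht
    refine (convex_Ici a).mul_sub_le_image_sub_of_le_deriv
      (hf.continuous.continuousOn) (hf.differentiableOn) ?_ a (mem_Ici.mpr le_rfl) t (mem_Ici.mpr ht) ht
    intro x hx
    exact h x (le_of_lt (by simpa using hx))
  refine ⟨max a (a + (M - f a) / c), le_max_left _ _, fun t ht => ?_⟩
  have ht1 : a ≤ t := le_trans (le_max_left _ _) ht
  have ht2 : a + (M - f a) / c ≤ t := le_trans (le_max_right _ _) ht
  have h2 : (M - f a) / c ≤ t - a := by linarith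
  have h3 : M - f a ≤ c * (t - a) := by
    rw [div_le_iff₀ hc] at h2; linarith [mul_comm c (t - a)]
  linarith [key t ht1]

/-- one level: bounded above & deriv ≥ c > 0 on a ray is absurd. -/
lemma no_pos1 (f : ℝ → ℝ) (hf : Differentiable ℝ f) (B : ℝ) (hB : ∀ t, f t ≤ B)
    (a : ℝ) {c : ℝ} (hc : 0 < c) (h : ∀ t, a ≤ t → c ≤ deriv f t) : False := by
  obtain ⟨b, _, hb⟩ := growth_aux f hf a hc h (B + 1)
  linarith [hb b le_rfl, hB b]

lemma no_pos2 (f : ℝ → ℝ) (hf : Differentiable ℝ f) (hf1 : Differentiable ℝ (deriv f))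
    (B : ℝ) (hB : ∀ t, f t ≤ B)
    (a : ℝ) {c : ℝ} (hc : 0 < c) (h : ∀ t, a ≤ t → c ≤ deriv (deriv f) t) : False := by
  obtain ⟨b, _, hb⟩ := growth_aux (deriv f) hf1 a hc h 1
  exact no_pos1 f hf B hB b one_pos hb

lemma no_pos3 (f : ℝ → ℝ) (hf : Differentiable ℝ f) (hf1 : Differentiable ℝ (deriv f))
    (hf2 : Differentiable ℝ (deriv (deriv f))) (B : ℝ) (hB : ∀ t, f t ≤ B)
    (a : ℝ) {c : ℝ} (hc : 0 < c) (h : ∀ t, a ≤ t → c ≤ deriv (deriv (deriv f)) t) : False := by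
  obtain ⟨b, _, hb⟩ := growth_aux (deriv (deriv f)) hf2 a hc h 1
  exact no_pos2 f hf hf1 B hB b one_pos hb

/-- A bounded `C⁴` function on `ℝ` whose fourth derivative is everywhere nonnegative
is constant. -/
theorem bounded_c4_nonneg_fourth_deriv_constant
    (φ : ℝ → ℝ) (hφ : ContDiff ℝ 4 φ)
    (B : ℝ) (hB : ∀ t : ℝ, |φ t| ≤ B)
    (h4 : ∀ t : ℝ, 0 ≤ iteratedDeriv 4 φ t) :
    ∀ s t : ℝ, φ s = φ t := by
  -- smoothness bookkeeping
  have hφ3 : ContDiff ℝ 3 (deriv φ) := by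
    have := (contDiff_succ_iff_deriv (n := 3)).mp (by exact_mod_cast hφ)
    exact this.2.2
  have hφ2 : ContDiff ℝ 2 (deriv (deriv φ)) := by
    have := (contDiff_succ_iff_deriv (n := 2)).mp (by exact_mod_cast hφ3)
    exact this.2.2
  have hφ1 : ContDiff ℝ 1 (deriv (deriv (deriv φ))) := by
    have := (contDiff_succ_iff_deriv (n := 1)).mp (by exact_mod_cast hφ2)
    exact this.2.2
  have d0 : Differentiable ℝ φ := hφ.differentiable (by norm_num)
  have d1 : Differentiable ℝ (deriv φ) := hφ3.differentiable (by norm_num)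
  have d2 : Differentiable ℝ (deriv (deriv φ)) := hφ2.differentiable (by norm_num)
  have d3 : Differentiable ℝ (deriv (deriv (deriv φ))) := hφ1.differentiable (by norm_num)
  have h4' : ∀ t : ℝ, 0 ≤ deriv (deriv (deriv (deriv φ))) t := by
    intro t
    have := h4 t
    simpa [iteratedDeriv_succ, iteratedDeriv_zero] using this
  have hBa : ∀ t, φ t ≤ B := fun t => (abs_le.mp (hB t)).2
  have hBa' : ∀ t, (fun s => -φ s) t ≤ B := fun t => by
    have := (abs_le.mp (hB t)).1; simpa using by linarith
  -- third derivative is monotone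
  have hmono : Monotone (deriv (deriv (deriv φ))) :=
    monotone_of_deriv_nonneg d3 h4'
  -- third derivative vanishes
  have h3zero : ∀ t, deriv (deriv (deriv φ)) t = 0 := by
    intro t
    rcases lt_trichotomy (deriv (deriv (deriv φ)) t) 0 with hlt | heq | hgt
    · -- use ψ s = φ (-s)
      exfalso
      set ψ : ℝ → ℝ := fun s => φ (-s) with hψ
      have hψc : ContDiff ℝ 4 ψ := hφ.comp (contDiff_id.neg)
      have hψ3 : ContDiff ℝ 3 (deriv ψ) :=
        ((contDiff_succ_iff_deriv (n := 3)).mp (by exact_mod_cast hψc)).2.2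
      have hψ2 : ContDiff ℝ 2 (deriv (deriv ψ)) :=
        ((contDiff_succ_iff_deriv (n := 2)).mp (by exact_mod_cast hψ3)).2.2
      have e0 : Differentiable ℝ ψ := hψc.differentiable (by norm_num)
      have e1 : Differentiable ℝ (deriv ψ) := hψ3.differentiable (by norm_num)
      have e2 : Differentiable ℝ (deriv (deriv ψ)) := hψ2.differentiable (by norm_num)
      have e3 : ∀ s, deriv (deriv (deriv ψ)) s = -(deriv (deriv (deriv φ)) (-s)) := by
        intro s
        have h1 : deriv (deriv (deriv ψ)) s = iteratedDeriv 3 ψ s := by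
          simp [iteratedDeriv_succ, iteratedDeriv_zero]
        have h2 : iteratedDeriv 3 φ (-s) = deriv (deriv (deriv φ)) (-s) := by
          simp [iteratedDeriv_succ, iteratedDeriv_zero]
        rw [h1, iteratedDeriv_comp_neg 3 φ s, h2]
        norm_num
      refine no_pos3 ψ e0 e1 e2 B (fun s => hBa (-s)) (-t)
        (c := -(deriv (deriv (deriv φ)) t)) (by linarith) (fun s hs => ?_)
      rw [e3 s]
      have : deriv (deriv (deriv φ)) (-s) ≤ deriv (deriv (deriv φ)) t :=
        hmono (by linarith)
      linarith
    · exact heq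
    · exfalso
      refine no_pos3 φ d0 d1 d2 B hBa t hgt (fun s hs => ?_)
      exact hmono hs
  -- second derivative is constant
  have h2const : ∀ s, deriv (deriv φ) s = deriv (deriv φ) 0 :=
    fun s => is_const_of_deriv_eq_zero d2 h3zero s 0
  have hnegderiv : ∀ (f : ℝ → ℝ), deriv (fun s => -f s) = fun s => -(deriv f s) :=
    fun f => deriv.neg'
  have hd2neg : deriv (deriv (fun s => -φ s)) = fun s => -(deriv (deriv φ) s) := by
    rw [hnegderiv φ]
    exact deriv.neg'
  -- second derivative vanishes
  have h2zero : ∀ s, deriv (deriv φ) s = 0 := by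
    intro s
    rw [h2const s]
    rcases lt_trichotomy (deriv (deriv φ) 0) 0 with hlt | heq | hgt
    · exfalso
      have e1 : Differentiable ℝ (deriv (fun s => -φ s)) := by
        rw [hnegderiv φ]; exact d1.neg
      refine no_pos2 (fun s => -φ s) d0.neg e1 B hBa' 0
        (c := -(deriv (deriv φ) 0)) (by linarith) (fun u hu => ?_)
      rw [hd2neg]
      have := h2const u
      simp only []
      linarith
    · exact heq
    · exact absurd (no_pos2 φ d0 d1 B hBa 0 hgt
        (fun u hu => le_of_eq (h2const u).symm)) not_false
  -- first derivative is constant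
  have h1const : ∀ s, deriv φ s = deriv φ 0 :=
    fun s => is_const_of_deriv_eq_zero d1 h2zero s 0
  have h1zero : ∀ s, deriv φ s = 0 := by
    intro s
    rw [h1const s]
    rcases lt_trichotomy (deriv φ 0) 0 with hlt | heq | hgt
    · exfalso
      refine no_pos1 (fun s => -φ s) d0.neg B hBa' 0
        (c := -(deriv φ 0)) (by linarith) (fun u hu => ?_)
      rw [hnegderiv φ]
      have := h1const u
      simp only []
      linarith
    · exact heq
    · exact absurd (no_pos1 φ d0 B hBa 0 hgt
        (fun u hu => le_of_eq (h1const u).symm)) not_false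
  exact is_const_of_deriv_eq_zero d0 h1zero
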